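/- arXiv:1608.01507 — 16 statements merged into one kernel-verified Lean document; each statement's English description precedes it below -/
import Mathlib

section
/- Consider the reduced three-wave interaction system ẋ = −2y² + γx + z + δy, ẏ = 2xy + γy − δx, ż = −2xz − 2z with γ = 0 and δ an arbitrary real parameter. Then for every differentiable solution (x(t), y(t), z(t)), the function t ↦ e^{2t} z(t) (y(t) − δ/2) is constant; that is, I = e^{2t} z (y − δ/2) is a first integral. -/
/-- Reduced three-wave interaction system with γ = 0:
`I = e^{2t} z (y - δ/2)` is a first integral. -/
theorem three_wave_case1 (γ δ : ℝ) (hγ : γ = 0) (x y z : ℝ → ℝ)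
    (hx : ∀ t, HasDerivAt x (-2 * (y t) ^ 2 + γ * x t + z t + δ * y t) t)
    (hy : ∀ t, HasDerivAt y (2 * x t * y t + γ * y t - δ * x t) t)
    (hz : ∀ t, HasDerivAt z (-2 * x t * z t - 2 * z t) t) :
    ∀ s t : ℝ,
      Real.exp (2 * s) * z s * (y s - δ / 2) =
        Real.exp (2 * t) * z t * (y t - δ / 2) := by
  subst hγ
  have hF : ∀ t : ℝ, HasDerivAt (fun t => Real.exp (2 * t) * z t * (y t - δ / 2)) 0 t := by
    intro t
    have he : HasDerivAt (fun t : ℝ => Real.exp (2 * t)) (2 * Real.exp (2 * t)) t := by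
      simpa [mul_comm] using ((hasDerivAt_id t).const_mul 2).exp
    have h1 := (he.mul (hz t)).mul ((hy t).sub_const (δ / 2))
    refine h1.congr_deriv ?_
    simp only [Pi.mul_apply]
    ring
  intro s t
  exact is_const_of_deriv_eq_zero (fun u => (hF u).differentiableAt)
    (fun u => (hF u).deriv) s t
end

section
/- Consider the reduced three-wave interaction system ẋ = −2y² + γx + z + δy, ẏ = 2xy + γy − δx, ż = −2xz − 2z with γ = −1 and δ an arbitrary real parameter. Then for every differentiable solution (x(t), y(t), z(t)), the function t ↦ e^{2t} (x(t)² + y(t)² + z(t)) is constant; that is, I = e^{2t}(x² + y² + z) is a first integral. -/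
/-- Reduced three-wave interaction system with γ = -1:
`I = e^{2t} (x² + y² + z)` is a first integral. -/
theorem three_wave_case2 (γ δ : ℝ) (hγ : γ = -1) (x y z : ℝ → ℝ)
    (hx : ∀ t, HasDerivAt x (-2 * (y t) ^ 2 + γ * x t + z t + δ * y t) t)
    (hy : ∀ t, HasDerivAt y (2 * x t * y t + γ * y t - δ * x t) t)
    (hz : ∀ t, HasDerivAt z (-2 * x t * z t - 2 * z t) t) :
    ∀ s t : ℝ,
      Real.exp (2 * s) * ((x s) ^ 2 + (y s) ^ 2 + z s) =
        Real.exp (2 * t) * ((x t) ^ 2 + (y t) ^ 2 + z t) := by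
  subst hγ
  have key : ∀ t, HasDerivAt (fun t => Real.exp (2 * t) * ((x t) ^ 2 + (y t) ^ 2 + z t)) 0 t := by
    intro t
    have he : HasDerivAt (fun t => Real.exp (2 * t)) (Real.exp (2 * t) * 2) t := by
      simpa [Function.comp_def] using (Real.hasDerivAt_exp (2 * t)).comp t ((hasDerivAt_id t).const_mul 2)
    have hw : HasDerivAt (fun t => (x t) ^ 2 + (y t) ^ 2 + z t)
        (2 * x t * (-2 * (y t) ^ 2 + (-1) * x t + z t + δ * y t)
          + 2 * y t * (2 * x t * y t + (-1) * y t - δ * x t)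
          + (-2 * x t * z t - 2 * z t)) t := by
      have h1 := ((hx t).pow 2)
      have h2 := ((hy t).pow 2)
      have := (h1.add h2).add (hz t)
      exact this.congr_deriv (by ring)
    have := he.mul hw
    exact this.congr_deriv (by ring)
  intro s t
  have : ∀ u v : ℝ, u ≤ v → Real.exp (2 * u) * ((x u) ^ 2 + (y u) ^ 2 + z u) =
      Real.exp (2 * v) * ((x v) ^ 2 + (y v) ^ 2 + z v) := by
    intro u v huv
    exact (constant_of_has_deriv_right_zero
      (f := fun w => Real.exp (2 * w) * ((x w) ^ 2 + (y w) ^ 2 + z w))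
      (a := u) (b := v)
      (fun w _ => (key w).continuousAt.continuousWithinAt)
      (fun w _ => (key w).hasDerivWithinAt) v ⟨huv, le_rfl⟩).symm
  rcases le_total s t with h | h
  · exact this s t h
  · exact (this t s h).symm
end

section
/- Consider the reduced three-wave interaction system ẋ = −2y² + γx + z + δy, ẏ = 2xy + γy − δx, ż = −2xz − 2z with γ = −2 and δ a nonzero real parameter. Then for every differentiable solution (x(t), y(t), z(t)), the function t ↦ e^{4t} (x(t)² + y(t)² + (2/δ) y(t) z(t)) is constant; that is, I = e^{4t}(x² + y² + (2/δ) y z) is a first integral. -/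
/-- Reduced three-wave interaction system with γ = -2, δ ≠ 0:
`I = e^{4t} (x² + y² + (2/δ) y z)` is a first integral. -/
theorem three_wave_case3 (γ δ : ℝ) (hγ : γ = -2) (hδ : δ ≠ 0) (x y z : ℝ → ℝ)
    (hx : ∀ t, HasDerivAt x (-2 * (y t) ^ 2 + γ * x t + z t + δ * y t) t)
    (hy : ∀ t, HasDerivAt y (2 * x t * y t + γ * y t - δ * x t) t)
    (hz : ∀ t, HasDerivAt z (-2 * x t * z t - 2 * z t) t) :
    ∀ s t : ℝ,
      Real.exp (4 * s) * ((x s) ^ 2 + (y s) ^ 2 + (2 / δ) * y s * z s) =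
        Real.exp (4 * t) * ((x t) ^ 2 + (y t) ^ 2 + (2 / δ) * y t * z t) := by
  subst hγ
  set I : ℝ → ℝ := fun t => Real.exp (4 * t) * ((x t) ^ 2 + (y t) ^ 2 + (2 / δ) * y t * z t)
  have hI : ∀ t, HasDerivAt I 0 t := by
    intro t
    have he : HasDerivAt (fun t : ℝ => Real.exp (4 * t)) (4 * Real.exp (4 * t)) t := by
      have := (Real.hasDerivAt_exp (4 * t)).comp t ((hasDerivAt_id t).const_mul 4)
      simpa [Function.comp_def, mul_comm] using this
    have hinner : HasDerivAt (fun t => (x t) ^ 2 + (y t) ^ 2 + (2 / δ) * y t * z t)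
        (2 * x t * (-2 * (y t) ^ 2 + (-2) * x t + z t + δ * y t)
          + 2 * y t * (2 * x t * y t + (-2) * y t - δ * x t)
          + (2 / δ) * ((2 * x t * y t + (-2) * y t - δ * x t) * z t
              + y t * (-2 * x t * z t - 2 * z t))) t := by
      have h1 := ((hx t).pow 2)
      have h2 := ((hy t).pow 2)
      have h3 := (((hy t).const_mul (2 / δ)).mul (hz t))
      have := (h1.add h2).add h3
      refine this.congr_deriv ?_
      ring
    have := he.mul hinner
    refine this.congr_deriv ?_
    field_simp
    ring
  intro s t
  have : ∀ a b : ℝ, I a = I b := by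
    intro a b
    have hconst := is_const_of_deriv_eq_zero (fun u => (hI u).differentiableAt)
      (fun u => (hI u).deriv) a b
    exact hconst
  exact this s t
end

section
/- Consider the reduced three-wave interaction system ẋ = −2y² + γx + z + δy, ẏ = 2xy + γy − δx, ż = −2xz − 2z with δ = 0 and γ an arbitrary real parameter. Then for every differentiable solution (x(t), y(t), z(t)), the function t ↦ e^{(2−γ)t} y(t) z(t) is constant; that is, I = e^{(2−γ)t} y z is a first integral. -/
/-- Reduced three-wave interaction system with δ = 0:
`I = e^{(2-γ)t} y z` is a first integral. -/
theorem three_wave_case4 (γ δ : ℝ) (hδ : δ = 0) (x y z : ℝ → ℝ)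
    (hx : ∀ t, HasDerivAt x (-2 * (y t) ^ 2 + γ * x t + z t + δ * y t) t)
    (hy : ∀ t, HasDerivAt y (2 * x t * y t + γ * y t - δ * x t) t)
    (hz : ∀ t, HasDerivAt z (-2 * x t * z t - 2 * z t) t) :
    ∀ s t : ℝ,
      Real.exp ((2 - γ) * s) * y s * z s =
        Real.exp ((2 - γ) * t) * y t * z t := by
  subst hδ
  have key : ∀ u : ℝ, HasDerivAt (fun t => Real.exp ((2 - γ) * t) * y t * z t) 0 u := by
    intro u
    have he : HasDerivAt (fun t => Real.exp ((2 - γ) * t)) ((2 - γ) * Real.exp ((2 - γ) * u)) u := by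
      have h1 : HasDerivAt (fun t : ℝ => (2 - γ) * t) (2 - γ) u := by
        simpa using (hasDerivAt_id u).const_mul (2 - γ)
      simpa [mul_comm] using h1.exp
    have h : HasDerivAt (fun t => Real.exp ((2 - γ) * t) * y t * z t)
        (((2 - γ) * Real.exp ((2 - γ) * u) * y u + Real.exp ((2 - γ) * u) * (2 * x u * y u + γ * y u - 0 * x u)) * z u +
          (Real.exp ((2 - γ) * u) * y u) * (-2 * x u * z u - 2 * z u)) u := ((he.mul (hy u)).mul (hz u))
    convert h using 1
    ring
  intro s t
  have : ∀ a b : ℝ, Real.exp ((2 - γ) * a) * y a * z a = Real.exp ((2 - γ) * b) * y b * z b := by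
    intro a b
    have := is_const_of_deriv_eq_zero (f := fun t => Real.exp ((2 - γ) * t) * y t * z t)
      (fun u => (key u).differentiableAt) (fun u => (key u).deriv) a b
    simpa using this
  exact this s t
end

section
/- Consider the reduced three-wave interaction system ẋ = −2y² + γx + z + δy, ẏ = 2xy + γy − δx, ż = −2xz − 2z with δ = 0 and γ = −1, i.e. ẋ = −2y² − x + z, ẏ = 2xy − y, ż = −2xz − 2z. Then for every differentiable solution (x(t), y(t), z(t)), both functions t ↦ e^{2t} (x(t)² + y(t)² + z(t)) and t ↦ e^{3t} y(t) z(t) are constant; that is, I₁ = e^{2t}(x² + y² + z) and I₂ = e^{3t} y z are two first integrals. -/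
/-- Reduced three-wave interaction system with δ = 0, γ = -1:
both `I₁ = e^{2t}(x² + y² + z)` and `I₂ = e^{3t} y z` are first integrals. -/
theorem three_wave_case5 (γ δ : ℝ) (hδ : δ = 0) (hγ : γ = -1) (x y z : ℝ → ℝ)
    (hx : ∀ t, HasDerivAt x (-2 * (y t) ^ 2 + γ * x t + z t + δ * y t) t)
    (hy : ∀ t, HasDerivAt y (2 * x t * y t + γ * y t - δ * x t) t)
    (hz : ∀ t, HasDerivAt z (-2 * x t * z t - 2 * z t) t) :
    (∀ s t : ℝ,
      Real.exp (2 * s) * ((x s) ^ 2 + (y s) ^ 2 + z s) =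
        Real.exp (2 * t) * ((x t) ^ 2 + (y t) ^ 2 + z t)) ∧
    (∀ s t : ℝ,
      Real.exp (3 * s) * y s * z s = Real.exp (3 * t) * y t * z t) := by
  subst hδ hγ
  have he : ∀ c t : ℝ, HasDerivAt (fun t => Real.exp (c * t)) (c * Real.exp (c * t)) t := by
    intro c t
    have := (Real.hasDerivAt_exp (c * t)).comp t ((hasDerivAt_id t).const_mul c)
    simpa [mul_comm, Function.comp_def] using this
  constructor
  · have h1 : ∀ t : ℝ, HasDerivAt (fun t => Real.exp (2 * t) * ((x t) ^ 2 + (y t) ^ 2 + z t)) 0 t := by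
      intro t
      have hI : HasDerivAt (fun t => Real.exp (2 * t) * ((x t) ^ 2 + (y t) ^ 2 + z t)) _ t := (he 2 t).fun_mul ((((hx t).fun_pow 2).fun_add ((hy t).fun_pow 2)).fun_add (hz t))
      convert hI using 1
      ring
    intro s t
    have hconst : ∀ a b : ℝ,
        Real.exp (2 * a) * ((x a) ^ 2 + (y a) ^ 2 + z a) =
        Real.exp (2 * b) * ((x b) ^ 2 + (y b) ^ 2 + z b) := by
      intro a b
      have := is_const_of_deriv_eq_zero (f := fun t => Real.exp (2 * t) * ((x t) ^ 2 + (y t) ^ 2 + z t))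
        (fun t => (h1 t).differentiableAt) (fun t => (h1 t).deriv) a b
      simpa using this
    exact hconst s t
  · have h2 : ∀ t : ℝ, HasDerivAt (fun t => Real.exp (3 * t) * y t * z t) 0 t := by
      intro t
      have hI : HasDerivAt (fun t => Real.exp (3 * t) * y t * z t) _ t := ((he 3 t).fun_mul (hy t)).fun_mul (hz t)
      convert hI using 1
      ring
    intro s t
    exact is_const_of_deriv_eq_zero (f := fun t => Real.exp (3 * t) * y t * z t)
      (fun t => (h2 t).differentiableAt) (fun t => (h2 t).deriv) s t
end

section
/- Let γ, δ ∈ ℝ. Define H₁(x,y,z) = z y − (δ/2) z and H₂(x,y,z) = x² + y² + z on ℝ³, and let G(x,y,z) be the symmetric 3×3 matrix diag(−γ/2, −γ/2, 2z). Then for every (x,y,z) ∈ ℝ³ the vector field of the reduced three-wave interaction system satisfies the metriplectic identity (−2y² + γx + z + δy, 2xy + γy − δx, −2xz − 2z) = ∇H₁(x,y,z) × ∇H₂(x,y,z) − G(x,y,z) ∇H₂(x,y,z), where × is the cross product in ℝ³ and ∇ the gradient in the variables (x,y,z). -/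
open Matrix

/-- The gradient of a function of three real variables, as a vector of
partial derivatives. -/
noncomputable def grad (H : ℝ → ℝ → ℝ → ℝ) (x y z : ℝ) : Fin 3 → ℝ :=
  ![deriv (fun s => H s y z) x, deriv (fun s => H x s z) y, deriv (fun s => H x y s) z]

/-- Metriplectic formulation of the reduced three-wave interaction system:
`X = ∇H₁ × ∇H₂ - G ∇H₂` with `H₁ = zy - (δ/2)z`, `H₂ = x² + y² + z`,
`G = diag(-γ/2, -γ/2, 2z)`. -/
theorem three_wave_metriplectic (γ δ : ℝ) :
    ∀ x y z : ℝ,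
      ![-2 * y ^ 2 + γ * x + z + δ * y, 2 * x * y + γ * y - δ * x,
          -2 * x * z - 2 * z] =
        (grad (fun x y z => z * y - δ / 2 * z) x y z) ⨯₃
            (grad (fun x y z => x ^ 2 + y ^ 2 + z) x y z) -
          (!![-γ / 2, 0, 0; 0, -γ / 2, 0; 0, 0, 2 * z] : Matrix (Fin 3) (Fin 3) ℝ).mulVec
            (grad (fun x y z => x ^ 2 + y ^ 2 + z) x y z) := by
  intro x y z
  have h1 : grad (fun x y z => z * y - δ / 2 * z) x y z = ![0, z, y - δ / 2] := by
    unfold grad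
    funext i
    fin_cases i
    · simp
    · show deriv (fun s => z * s - δ / 2 * z) y = z
      have h : HasDerivAt (fun s : ℝ => z * s - δ / 2 * z) (z * 1) y :=
        ((hasDerivAt_id y).const_mul z).sub_const _
      rw [h.deriv]; ring
    · show deriv (fun s => s * y - δ / 2 * s) z = y - δ / 2
      have h : HasDerivAt (fun s : ℝ => s * y - δ / 2 * s) (1 * y - δ / 2 * 1) z :=
        ((hasDerivAt_id z).mul_const y).sub ((hasDerivAt_id z).const_mul (δ / 2))
      rw [h.deriv]; ring
  have h2 : grad (fun x y z => x ^ 2 + y ^ 2 + z) x y z = ![2 * x, 2 * y, 1] := by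
    unfold grad
    funext i
    fin_cases i
    · show deriv (fun s => s ^ 2 + y ^ 2 + z) x = 2 * x
      have h : HasDerivAt (fun s : ℝ => s ^ 2 + y ^ 2 + z) (2 * x ^ 1) x :=
        ((hasDerivAt_pow 2 x).add_const _).add_const _
      rw [h.deriv]; ring
    · show deriv (fun s => x ^ 2 + s ^ 2 + z) y = 2 * y
      have h : HasDerivAt (fun s : ℝ => x ^ 2 + s ^ 2 + z) (2 * y ^ 1) y :=
        ((hasDerivAt_pow 2 y).const_add _).add_const _
      rw [h.deriv]; ring
    · show deriv (fun s => x ^ 2 + y ^ 2 + s) z = 1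
      have h : HasDerivAt (fun s : ℝ => x ^ 2 + y ^ 2 + s) 1 z :=
        (hasDerivAt_id z).const_add _
      rw [h.deriv]
  rw [h1, h2]
  funext i
  fin_cases i <;>
    simp [crossProduct, Matrix.mulVec, dotProduct, Fin.sum_univ_three] <;> ring
end

section
/- Define H₁(u,v,w) = v w and H₂(u,v,w) = u² + v² + w on ℝ³. Then for every (u,v,w) ∈ ℝ³ the identity (−2v² + w, 2uv, −2uw) = ∇H₁(u,v,w) × ∇H₂(u,v,w) holds; that is, the transformed reduced three-wave interaction system u′ = −2v² + w, v′ = 2uv, w′ = −2uw is a Nambu–Poisson (bi-Hamiltonian) system with Hamiltonians H₁ and H₂ and Jacobi's last multiplier equal to one. -/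
open Matrix

/-- The transformed reduced three-wave interaction system
`u' = -2v² + w, v' = 2uv, w' = -2uw` is Nambu-Poisson:
its vector field equals `∇H₁ × ∇H₂` with `H₁ = vw`, `H₂ = u² + v² + w`. -/
theorem three_wave_nambu :
    ∀ u v w : ℝ,
      ![-2 * v ^ 2 + w, 2 * u * v, -2 * u * w] =
        (grad (fun u v w => v * w) u v w) ⨯₃
          (grad (fun u v w => u ^ 2 + v ^ 2 + w) u v w) := by
  intro u v w
  have g1 : grad (fun u v w => v * w) u v w = ![0, w, v] := by
    funext i
    fin_cases i <;> simp [grad, deriv_const_mul_field]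
  have g2 : grad (fun u v w => u ^ 2 + v ^ 2 + w) u v w = ![2 * u, 2 * v, 1] := by
    funext i
    fin_cases i <;>
      simp [grad]
  rw [g1, g2]
  simp [crossProduct]
  exact ⟨by ring, by ring, by ring⟩
end

section
/- Consider the Rabinovich system ẋ = hy − ν₁x + yz, ẏ = hx − ν₂y − xz, ż = −ν₃z + xy with h = 0 and ν₂ = ν₃ (ν₁, ν₃ arbitrary real parameters). Then for every differentiable solution (x(t), y(t), z(t)), the function t ↦ e^{2ν₃ t}(y(t)² + z(t)²) is constant; that is, I₁ = e^{2ν₃ t}(y² + z²) is a first integral. -/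
/-- Rabinovich system with h = 0, ν₂ = ν₃:
`I₁ = e^{2ν₃ t}(y² + z²)` is a first integral. -/
theorem rabinovich_case1 (h ν₁ ν₂ ν₃ : ℝ) (hh : h = 0) (hν : ν₂ = ν₃)
    (x y z : ℝ → ℝ)
    (hx : ∀ t, HasDerivAt x (h * y t - ν₁ * x t + y t * z t) t)
    (hy : ∀ t, HasDerivAt y (h * x t - ν₂ * y t - x t * z t) t)
    (hz : ∀ t, HasDerivAt z (-ν₃ * z t + x t * y t) t) :
    ∀ s t : ℝ,
      Real.exp (2 * ν₃ * s) * ((y s) ^ 2 + (z s) ^ 2) =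
        Real.exp (2 * ν₃ * t) * ((y t) ^ 2 + (z t) ^ 2) := by
  subst hh hν
  have key : ∀ t : ℝ, HasDerivAt
      (fun t => Real.exp (2 * ν₂ * t) * ((y t) ^ 2 + (z t) ^ 2)) 0 t := by
    intro t
    have he : HasDerivAt (fun t => Real.exp (2 * ν₂ * t))
        (Real.exp (2 * ν₂ * t) * (2 * ν₂)) t := by
      have := ((hasDerivAt_id t).const_mul (2 * ν₂)).exp
      simpa [mul_comm] using this
    have hy2 := ((hy t).fun_pow 2)
    have hz2 := ((hz t).fun_pow 2)
    have hsum := hy2.fun_add hz2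
    have := he.fun_mul hsum
    refine this.congr_deriv ?_
    norm_num
    ring
  intro s t
  exact is_const_of_deriv_eq_zero (fun v => (key v).differentiableAt)
    (fun v => (key v).deriv) s t
end

section
/- Consider the Rabinovich system ẋ = hy − ν₁x + yz, ẏ = hx − ν₂y − xz, ż = −ν₃z + xy with h = 0 and ν₁ = ν₂ (ν₁, ν₃ arbitrary real parameters). Then for every differentiable solution (x(t), y(t), z(t)), the function t ↦ e^{2ν₁ t}(x(t)² + y(t)²) is constant; that is, I₂ = e^{2ν₁ t}(x² + y²) is a first integral. -/
/-- Rabinovich system with h = 0, ν₁ = ν₂: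
`I₂ = e^{2ν₁ t}(x² + y²)` is a first integral. -/
theorem rabinovich_case2 (h ν₁ ν₂ ν₃ : ℝ) (hh : h = 0) (hν : ν₁ = ν₂)
    (x y z : ℝ → ℝ)
    (hx : ∀ t, HasDerivAt x (h * y t - ν₁ * x t + y t * z t) t)
    (hy : ∀ t, HasDerivAt y (h * x t - ν₂ * y t - x t * z t) t)
    (hz : ∀ t, HasDerivAt z (-ν₃ * z t + x t * y t) t) :
    ∀ s t : ℝ,
      Real.exp (2 * ν₁ * s) * ((x s) ^ 2 + (y s) ^ 2) =
        Real.exp (2 * ν₁ * t) * ((x t) ^ 2 + (y t) ^ 2) := by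
  subst hh hν
  set F : ℝ → ℝ := fun t => Real.exp (2 * ν₁ * t) * ((x t) ^ 2 + (y t) ^ 2) with hF
  have hF' : ∀ t, HasDerivAt F 0 t := by
    intro t
    have he : HasDerivAt (fun t => Real.exp (2 * ν₁ * t))
        (Real.exp (2 * ν₁ * t) * (2 * ν₁)) t := by
      simpa using ((hasDerivAt_id t).const_mul (2 * ν₁)).exp
    have hsq : HasDerivAt (fun t => (x t) ^ 2 + (y t) ^ 2)
        (2 * x t * (0 * y t - ν₁ * x t + y t * z t)
          + 2 * y t * (0 * x t - ν₁ * y t - x t * z t)) t := by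
      have h1 := ((hx t).fun_pow 2)
      have h2 := ((hy t).fun_pow 2)
      simpa [mul_comm, mul_assoc, mul_left_comm] using h1.fun_add h2
    have := he.fun_mul hsq
    refine this.congr_deriv ?_
    ring
  exact fun s t =>
    is_const_of_deriv_eq_zero (fun u => (hF' u).differentiableAt)
      (fun u => (hF' u).deriv) s t
end

section
/- Define H₁(u,v,w) = (v² + w²)/2 and H₂(u,v,w) = (u² + v²)/2 on ℝ³. Then for every (u,v,w) ∈ ℝ³ the identity (vw, −uw, uv) = ∇H₂(u,v,w) × ∇H₁(u,v,w) holds; that is, the transformed Rabinovich system u′ = vw, v′ = −uw, w′ = uv is a bi-Hamiltonian/Nambu–Poisson system, given by the cross product of the gradients of its two first integrals, with Jacobi's last multiplier equal to one. -/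
open Matrix

lemma deriv_sq_half (a c : ℝ) : deriv (fun s : ℝ => (s ^ 2 + c) / 2) a = a := by
  have : (fun s : ℝ => (s ^ 2 + c) / 2) = fun s => s ^ 2 / 2 + c / 2 := by
    funext s; ring
  rw [this]
  simp [deriv_div_const]

lemma deriv_sq_half' (a c : ℝ) : deriv (fun s : ℝ => (c + s ^ 2) / 2) a = a := by
  have : (fun s : ℝ => (c + s ^ 2) / 2) = fun s => (s ^ 2 + c) / 2 := by
    funext s; ring
  rw [this, deriv_sq_half]

/-- The transformed Rabinovich system `u' = vw, v' = -uw, w' = uv` is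
bi-Hamiltonian/Nambu-Poisson: its vector field equals `∇H₂ × ∇H₁` with
`H₁ = (v² + w²)/2`, `H₂ = (u² + v²)/2`. -/
theorem rabinovich_nambu :
    ∀ u v w : ℝ,
      ![v * w, -(u * w), u * v] =
        (grad (fun u v w => (u ^ 2 + v ^ 2) / 2) u v w) ⨯₃
          (grad (fun u v w => (v ^ 2 + w ^ 2) / 2) u v w) := by
  intro u v w
  simp only [grad, deriv_sq_half, deriv_sq_half', deriv_const]
  simp [crossProduct]
end

section
/- Let h, ν₁, ν₂, ν₃ ∈ ℝ. Define H₁(x,y,z) = (x² + y²)/2 and H₂(x,y,z) = (y² + z²)/2 on ℝ³, and for y ≠ 0 let G(x,y,z) be the symmetric 3×3 matrix with rows (ν₁, −h, 0), (−h, ν₂, zν₃/y), (0, zν₃/y, 0). Then at every point (x,y,z) ∈ ℝ³ with y ≠ 0, the vector field of the Rabinovich system satisfies the metriplectic identity (hy − ν₁x + yz, hx − ν₂y − xz, −ν₃z + xy) = ∇H₁(x,y,z) × ∇H₂(x,y,z) − G(x,y,z) ∇H₁(x,y,z), where × is the cross product in ℝ³ and ∇ the gradient. -/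
open Matrix

/-- Metriplectic formulation of the Rabinovich system (at points with y ≠ 0):
`X = ∇H₁ × ∇H₂ - G ∇H₁` with `H₁ = (x² + y²)/2`, `H₂ = (y² + z²)/2` and
`G` the symmetric matrix with rows `(ν₁, -h, 0)`, `(-h, ν₂, zν₃/y)`,
`(0, zν₃/y, 0)`. -/
theorem rabinovich_metriplectic (h ν₁ ν₂ ν₃ : ℝ) :
    ∀ x y z : ℝ, y ≠ 0 →
      ![h * y - ν₁ * x + y * z, h * x - ν₂ * y - x * z, -ν₃ * z + x * y] =
        (grad (fun x y z => (x ^ 2 + y ^ 2) / 2) x y z) ⨯₃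
            (grad (fun x y z => (y ^ 2 + z ^ 2) / 2) x y z) -
          (!![ν₁, -h, 0; -h, ν₂, z * ν₃ / y; 0, z * ν₃ / y, 0] :
              Matrix (Fin 3) (Fin 3) ℝ).mulVec
            (grad (fun x y z => (x ^ 2 + y ^ 2) / 2) x y z) := by
  intro x y z hy
  have g1 : grad (fun x y z => (x ^ 2 + y ^ 2) / 2) x y z = ![x, y, 0] := by
    unfold grad
    simp [deriv_sq_half, deriv_sq_half']
  have g2 : grad (fun x y z => (y ^ 2 + z ^ 2) / 2) x y z = ![0, y, z] := by
    unfold grad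
    simp [deriv_sq_half, deriv_sq_half']
  rw [g1, g2]
  rw [cross_apply]
  funext i
  fin_cases i
  · simp [mulVec, dotProduct, Fin.sum_univ_three]; ring
  · simp [mulVec, dotProduct, Fin.sum_univ_three]; ring
  · simp [mulVec, dotProduct, Fin.sum_univ_three]; field_simp; ring
end

section
/- Consider the reduced Hindmarsh–Rose system ẋ = y − z + bx² + α, ẏ = β − dx² − y, ż = px − rz − γ with parameters satisfying b = −d, p = −2, α = β + γ, r = 1 (d, β, γ arbitrary). Then for every differentiable solution (x(t), y(t), z(t)), the function t ↦ e^{2t}(x(t) − y(t) + z(t)) is constant; that is, I = e^{2t}(x − y + z) is a first integral. -/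
/-- Reduced Hindmarsh-Rose system with b = -d, p = -2, α = β + γ, r = 1:
`I = e^{2t}(x - y + z)` is a first integral. -/
theorem hindmarsh_rose_case3 (α β γ b d p r : ℝ)
    (hb : b = -d) (hp : p = -2) (hα : α = β + γ) (hr : r = 1) (x y z : ℝ → ℝ)
    (hx : ∀ t, HasDerivAt x (y t - z t + b * (x t) ^ 2 + α) t)
    (hy : ∀ t, HasDerivAt y (β - d * (x t) ^ 2 - y t) t)
    (hz : ∀ t, HasDerivAt z (p * x t - r * z t - γ) t) :
    ∀ s t : ℝ,
      Real.exp (2 * s) * (x s - y s + z s) =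
        Real.exp (2 * t) * (x t - y t + z t) := by
  subst hb hp hα hr
  have key : ∀ t : ℝ, HasDerivAt (fun t => Real.exp (2 * t) * (x t - y t + z t)) 0 t := by
    intro t
    have he : HasDerivAt (fun t : ℝ => Real.exp (2 * t)) (2 * Real.exp (2 * t)) t := by
      have h2 : HasDerivAt (fun u : ℝ => 2 * u) 2 t := by
        simpa using (hasDerivAt_id t).const_mul (2 : ℝ)
      simpa [Function.comp_def, mul_comm] using (Real.hasDerivAt_exp (2 * t)).comp t h2
    have hw : HasDerivAt (fun u => x u - y u + z u) _ t := ((hx t).sub (hy t)).add (hz t)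
    have : HasDerivAt (fun u => Real.exp (2 * u) * (x u - y u + z u)) _ t := he.mul hw
    convert this using 1
    ring
  intro s t
  exact is_const_of_deriv_eq_zero (fun u => (key u).differentiableAt)
    (fun u => (key u).deriv) s t
end

section
/- Consider the reduced Hindmarsh–Rose system ẋ = y − z + bx² + α, ẏ = β − dx² − y, ż = px − rz − γ with p ≠ 0 and parameters satisfying d = 2b, r = −(p+1), β = 2(γ/p − α) (α, γ, p, b otherwise arbitrary). Then for every differentiable solution (x(t), y(t), z(t)), the function t ↦ e^{−t}(2x(t) + y(t) + 2z(t)/p) is constant; that is, I = e^{−t}(2x + y + 2z/p) is a first integral. -/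
/-- Reduced Hindmarsh-Rose system with p ≠ 0, d = 2b, r = -(p+1),
β = 2(γ/p - α): `I = e^{-t}(2x + y + 2z/p)` is a first integral. -/
theorem hindmarsh_rose_case4 (α β γ b d p r : ℝ) (hp : p ≠ 0)
    (hd : d = 2 * b) (hr : r = -(p + 1)) (hβ : β = 2 * (γ / p - α))
    (x y z : ℝ → ℝ)
    (hx : ∀ t, HasDerivAt x (y t - z t + b * (x t) ^ 2 + α) t)
    (hy : ∀ t, HasDerivAt y (β - d * (x t) ^ 2 - y t) t)
    (hz : ∀ t, HasDerivAt z (p * x t - r * z t - γ) t) :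
    ∀ s t : ℝ,
      Real.exp (-s) * (2 * x s + y s + 2 * z s / p) =
        Real.exp (-t) * (2 * x t + y t + 2 * z t / p) := by
  set F : ℝ → ℝ := fun t => Real.exp (-t) * (2 * x t + y t + 2 * z t / p) with hF
  have key : ∀ t, HasDerivAt F 0 t := by
    intro t
    have hexp : HasDerivAt (fun t => Real.exp (-t)) (-Real.exp (-t)) t := by
      simpa using (hasDerivAt_neg t).exp
    have hin : HasDerivAt (fun t => 2 * x t + y t + 2 * z t / p)
        (2 * (y t - z t + b * (x t) ^ 2 + α) + (β - d * (x t) ^ 2 - y t)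
          + 2 * (p * x t - r * z t - γ) / p) t := by
      exact (((hx t).const_mul 2).add (hy t)).add (((hz t).const_mul 2).div_const p)
    have h := hexp.mul hin
    refine h.congr_deriv ?_
    rw [hd, hr, hβ]
    field_simp
    ring
  intro s t
  have : ∀ u v : ℝ, F u = F v := by
    intro u v
    have hc : ∀ w, F w = F 0 := by
      intro w
      have := is_const_of_deriv_eq_zero (f := F)
        (fun u => (key u).differentiableAt) (fun u => (key u).deriv) w 0
      exact this
    rw [hc u, hc v]
  exact this s t
end

section
/- Consider the reduced Hindmarsh–Rose system ẋ = y − z + bx² + α, ẏ = β − dx² − y, ż = px − rz − γ with β, γ, r, b, d arbitrary real parameters subject to b ≠ 0, d ≠ 0, d − b + br ≠ 0, −d + 2b + br ≠ 0, and with α = −b(γd + βd − bβ + rβb)/(d(d − b + br)) and p = (b − d)(d − b + br)/b². Set A = −(b−d)(d−b+br)/(b(−d+2b+br)), B = −b(b−d)(d−b+br)/(d²(−d+2b+br)), C = −b(b−d)/((d−b+br)(−d+2b+br)), E = −2(b−d)(d−b+br)/(d(−d+2b+br)), F = 2(b−d)/(−d+2b+br), G = 2b(b−d)/(d(−d+2b+br)).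 Then for every differentiable solution (x(t), y(t), z(t)), the function t ↦ e^{(2(b−d)/b)t}(A x(t)² + B y(t)² + C z(t)² + E x(t)y(t) + F x(t)z(t) + G y(t)z(t)) is constant; that is, I = e^{(2(b−d)/b)t}(Ax² + By² + Cz² + Exy + Fxz + Gyz) is a first integral. -/
set_option maxHeartbeats 1000000 in
lemma hr5_aux (β γ b d r X Y Z : ℝ) (hb : b ≠ 0) (hd : d ≠ 0)
    (h1 : d - b + b * r ≠ 0) (h2 : -d + 2 * b + b * r ≠ 0) :
    2 * (b - d) / b * ((-((b - d) * (d - b + b * r)) / (b * (-d + 2 * b + b * r))) * X ^ 2 + (-(b * (b - d) * (d - b + b * r)) / (d ^ 2 * (-d + 2 * b + b * r))) * Y ^ 2 + (-(b * (b - d)) / ((d - b + b * r) * (-d + 2 * b + b * r))) * Z ^ 2 + (-2 * ((b - d) * (d - b + b * r)) / (d * (-d + 2 * b + b * r))) * X * Y + (2 * (b - d) / (-d + 2 * b + b * r)) * X * Z + (2 * (b * (b - d)) / (d * (-d + 2 * b + b * r))) * Y * Z) + ((-((b - d) * (d - b + b * r)) / (b * (-d + 2 * b + b * r))) * (2 *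 X * (Y - Z + b * X ^ 2 + -(b * (γ * d + β * d - b * β + r * β * b)) / (d * (d - b + b * r)))) + (-(b * (b - d) * (d - b + b * r)) / (d ^ 2 * (-d + 2 * b + b * r))) * (2 * Y * (β - d * X ^ 2 - Y)) + (-(b * (b - d)) / ((d - b + b * r) * (-d + 2 * b + b * r))) * (2 * Z * ((b - d) * (d - b + b * r) / b ^ 2 * X - r * Z - γ)) + (-2 * ((b - d) * (d - b + b * r)) / (d * (-d + 2 * b + b * r))) * ((Y - Z + b * X ^ 2 + -(b * (γ * d + β * d - b * β + r * β * b)) / (d * (d - b + b * r))) * Y + X * (β - d * X ^ 2 - Y)) + (2 * (b - d) / (-d + 2 * b + b * r)) * ((Y - Z + b * X ^ 2 + -(b * (γ * d + β * d - b * β + r * β * b)) / (d * (d - b + b * r))) * Z + X * ((b - d) * (d - b + b * r) / b ^ 2 * X - r * Z - γ)) + (2 * (b * (b - d)) / (d * (-d + 2 * b + b * r))) * ((β - d * X ^ 2 - Y) * Z + Y * ((b - d) * (d - b + b * r) / b ^ 2 * X - r * Z - γ))) = 0 := by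
  field_simp
  ring

set_option maxHeartbeats 1000000 in
/-- Reduced Hindmarsh-Rose system, quadratic first integral. -/
theorem hindmarsh_rose_case5 (α β γ b d p r : ℝ)
    (hb : b ≠ 0) (hd : d ≠ 0) (h1 : d - b + b * r ≠ 0) (h2 : -d + 2 * b + b * r ≠ 0)
    (hα : α = -(b * (γ * d + β * d - b * β + r * β * b)) / (d * (d - b + b * r)))
    (hp : p = (b - d) * (d - b + b * r) / b ^ 2)
    (A B C E F G : ℝ)
    (hA : A = -((b - d) * (d - b + b * r)) / (b * (-d + 2 * b + b * r)))
    (hB : B = -(b * (b - d) * (d - b + b * r)) / (d ^ 2 * (-d + 2 * b + b * r)))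
    (hC : C = -(b * (b - d)) / ((d - b + b * r) * (-d + 2 * b + b * r)))
    (hE : E = -2 * ((b - d) * (d - b + b * r)) / (d * (-d + 2 * b + b * r)))
    (hF : F = 2 * (b - d) / (-d + 2 * b + b * r))
    (hG : G = 2 * (b * (b - d)) / (d * (-d + 2 * b + b * r)))
    (x y z : ℝ → ℝ)
    (hx : ∀ t, HasDerivAt x (y t - z t + b * (x t) ^ 2 + α) t)
    (hy : ∀ t, HasDerivAt y (β - d * (x t) ^ 2 - y t) t)
    (hz : ∀ t, HasDerivAt z (p * x t - r * z t - γ) t) :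
    ∀ s t : ℝ,
      Real.exp (2 * (b - d) / b * s) *
          (A * (x s) ^ 2 + B * (y s) ^ 2 + C * (z s) ^ 2 +
            E * x s * y s + F * x s * z s + G * y s * z s) =
        Real.exp (2 * (b - d) / b * t) *
          (A * (x t) ^ 2 + B * (y t) ^ 2 + C * (z t) ^ 2 +
            E * x t * y t + F * x t * z t + G * y t * z t) := by
  subst hα hp hA hB hC hE hF hG
  have key : ∀ u : ℝ, HasDerivAt (fun u => Real.exp (2 * (b - d) / b * u) *
      ((-((b - d) * (d - b + b * r)) / (b * (-d + 2 * b + b * r))) * (x u) ^ 2 + (-(b * (b - d) * (d - b + b * r)) / (d ^ 2 * (-d + 2 * b + b * r))) * (y u) ^ 2 + (-(b * (b - d)) / ((d - b + b * r) * (-d + 2 * b + b * r))) * (z u) ^ 2 +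
        (-2 * ((b - d) * (d - b + b * r)) / (d * (-d + 2 * b + b * r))) * x u * y u + (2 * (b - d) / (-d + 2 * b + b * r)) * x u * z u + (2 * (b * (b - d)) / (d * (-d + 2 * b + b * r))) * y u * z u)) 0 u := by
    intro u
    have hxu := hx u
    have hyu := hy u
    have hzu := hz u
    have hexp : HasDerivAt (fun u : ℝ => Real.exp (2 * (b - d) / b * u))
        (Real.exp (2 * (b - d) / b * u) * (2 * (b - d) / b)) u := by
      exact ((hasDerivAt_id u).const_mul (2 * (b - d) / b)).exp.congr_deriv (by simp)
    have h1' : HasDerivAt (fun u => (x u) ^ 2) (2 * x u * ((y u) - (z u) + b * (x u) ^ 2 + -(b * (γ * d + β * d - b * β + r * β * b)) / (d * (d - b + b * r)))) u := by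
      exact (hxu.pow 2).congr_deriv (by ring)
    have h2' : HasDerivAt (fun u => (y u) ^ 2) (2 * y u * (β - d * (x u) ^ 2 - (y u))) u := by
      exact (hyu.pow 2).congr_deriv (by ring)
    have h3' : HasDerivAt (fun u => (z u) ^ 2) (2 * z u * ((b - d) * (d - b + b * r) / b ^ 2 * (x u) - r * (z u) - γ)) u := by
      exact (hzu.pow 2).congr_deriv (by ring)
    have h4' : HasDerivAt (fun u => x u * y u) (((y u) - (z u) + b * (x u) ^ 2 + -(b * (γ * d + β * d - b * β + r * β * b)) / (d * (d - b + b * r))) * y u + x u * (β - d * (x u) ^ 2 - (y u))) u := hxu.mul hyu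
    have h5' : HasDerivAt (fun u => x u * z u) (((y u) - (z u) + b * (x u) ^ 2 + -(b * (γ * d + β * d - b * β + r * β * b)) / (d * (d - b + b * r))) * z u + x u * ((b - d) * (d - b + b * r) / b ^ 2 * (x u) - r * (z u) - γ)) u := hxu.mul hzu
    have h6' : HasDerivAt (fun u => y u * z u) ((β - d * (x u) ^ 2 - (y u)) * z u + y u * ((b - d) * (d - b + b * r) / b ^ 2 * (x u) - r * (z u) - γ)) u := hyu.mul hzu
    have hQ := (((((h1'.const_mul (-((b - d) * (d - b + b * r)) / (b * (-d + 2 * b + b * r)))).add (h2'.const_mul (-(b * (b - d) * (d - b + b * r)) / (d ^ 2 * (-d + 2 * b + b * r))))).add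
      (h3'.const_mul (-(b * (b - d)) / ((d - b + b * r) * (-d + 2 * b + b * r))))).add (h4'.const_mul (-2 * ((b - d) * (d - b + b * r)) / (d * (-d + 2 * b + b * r))))).add
      (h5'.const_mul (2 * (b - d) / (-d + 2 * b + b * r)))).add (h6'.const_mul (2 * (b * (b - d)) / (d * (-d + 2 * b + b * r))))
    have hMul := hexp.mul hQ
    have h0 := hr5_aux β γ b d r (x u) (y u) (z u) hb hd h1 h2
    refine (hMul.congr_deriv ?_).congr_of_eventuallyEq (Filter.Eventually.of_forall fun v => ?_)
    · simp only [Pi.add_apply]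
      linear_combination (Real.exp (2 * (b - d) / b * u)) * h0
    · simp only [Pi.mul_apply, Pi.add_apply]; ring
  intro s t
  exact is_const_of_deriv_eq_zero (fun u => (key u).differentiableAt)
    (fun u => (key u).deriv) s t
end

section
/- Consider the reduced Hindmarsh–Rose system ẋ = y − z + bx² + α, ẏ = β − dx² − y, ż = px − rz − γ with p = 0, b = d, r ≠ 0 and α = −(βr + γ)/r (β, γ, r otherwise arbitrary). Then for every differentiable solution (x(t), y(t), z(t)), the function t ↦ r x(t) + r y(t) − z(t) is constant; that is, I = rx + ry − z is a time-independent first integral. In particular, when additionally r = −1, I = x + y + z is a first integral. -/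
/-- Reduced Hindmarsh-Rose system with p = 0, b = d, r ≠ 0, α = -(βr + γ)/r:
`I = rx + ry - z` is a time-independent first integral; in particular,
if additionally r = -1 then `x + y + z` is a first integral. -/
theorem hindmarsh_rose_case6 (α β γ b d p r : ℝ)
    (hp : p = 0) (hb : b = d) (hr : r ≠ 0) (hα : α = -(β * r + γ) / r)
    (x y z : ℝ → ℝ)
    (hx : ∀ t, HasDerivAt x (y t - z t + b * (x t) ^ 2 + α) t)
    (hy : ∀ t, HasDerivAt y (β - d * (x t) ^ 2 - y t) t)
    (hz : ∀ t, HasDerivAt z (p * x t - r * z t - γ) t) :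
    (∀ s t : ℝ,
      r * x s + r * y s - z s = r * x t + r * y t - z t) ∧
    (r = -1 → ∀ s t : ℝ, x s + y s + z s = x t + y t + z t) := by
  have key : ∀ s t : ℝ, r * x s + r * y s - z s = r * x t + r * y t - z t := by
    have hI : ∀ t, HasDerivAt (fun t => r * x t + r * y t - z t) 0 t := by
      intro t
      have h := (((hx t).const_mul r).add ((hy t).const_mul r)).sub (hz t)
      refine h.congr_deriv ?_
      subst hp hb hα
      have e : r * (-(β * r + γ) / r) = -(β * r + γ) := mul_div_cancel₀ _ hr
      linear_combination e
    intro s t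
    have : ∀ u v : ℝ, u ≤ v → (fun t => r * x t + r * y t - z t) u =
        (fun t => r * x t + r * y t - z t) v := by
      intro u v huv
      exact (constant_of_has_deriv_right_zero
        (fun w _ => (hI w).continuousAt.continuousWithinAt)
        (fun w _ => (hI w).hasDerivWithinAt) v ⟨huv, le_rfl⟩).symm
    rcases le_total s t with h | h
    · exact this s t h
    · exact (this t s h).symm
  refine ⟨key, fun hr1 s t => ?_⟩
  have := key s t
  rw [hr1] at this
  linarith
end

section
/- Consider the Oregonator model ẋ = (1/ε)(x + y − qx² − xy), ẏ = −y + 2hz − xy, ż = (1/p)(x − z) with parameter values q = 0, ε = p = −1, h = −3/2; i.e. the system ẋ = −x − y + xy, ẏ = −y − 3z − xy, ż = −x + z. Then for every differentiable solution (x(t), y(t), z(t)), the function t ↦ e^{2t}(x(t) + y(t) + z(t)) is constant; that is, I = e^{2t}(x + y + z) is a first integral. -/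
/-- Oregonator model with q = 0, ε = p = -1, h = -3/2:
`I = e^{2t}(x + y + z)` is a first integral. -/
theorem oregonator_first_integral (ε q p h : ℝ)
    (hq : q = 0) (hε : ε = -1) (hp : p = -1) (hh : h = -(3 / 2))
    (x y z : ℝ → ℝ)
    (hx : ∀ t, HasDerivAt x ((1 / ε) * (x t + y t - q * (x t) ^ 2 - x t * y t)) t)
    (hy : ∀ t, HasDerivAt y (-y t + 2 * h * z t - x t * y t) t)
    (hz : ∀ t, HasDerivAt z ((1 / p) * (x t - z t)) t) :
    ∀ s t : ℝ,
      Real.exp (2 * s) * (x s + y s + z s) =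
        Real.exp (2 * t) * (x t + y t + z t) := by
  subst hq hε hp hh
  have key : ∀ t, HasDerivAt (fun t => Real.exp (2 * t) * (x t + y t + z t)) 0 t := by
    intro t
    have hE : HasDerivAt (fun t : ℝ => Real.exp (2 * t)) (Real.exp (2 * t) * 2) t := by
      simpa using ((hasDerivAt_id' t).const_mul (2 : ℝ)).exp
    have hS := ((hx t).add (hy t)).add (hz t)
    have := hE.mul hS
    refine this.congr_deriv ?_
    simp only [Pi.add_apply]
    ring
  intro s t
  have := is_const_of_deriv_eq_zero (f := fun t => Real.exp (2 * t) * (x t + y t + z t))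
    (fun u => (key u).differentiableAt) (fun u => (key u).deriv) s t
  simpa using this
end
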